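/- Define f(s) = s + 2^(padicValNat 2 s). For every positive integer s ≤ n, the number of iterations j such that f^[j](s) ≤ n is at most Nat.log 2 n + 1. -/

import Mathlib

private lemma val_step (s : ℕ) (hs : 0 < s) :
    padicValNat 2 s + 1 ≤ padicValNat 2 (s + 2 ^ padicValNat 2 s) := by
  haveI : Fact (Nat.Prime 2) := ⟨Nat.prime_two⟩
  set v := padicValNat 2 s with hv
  obtain ⟨k, hk⟩ : 2 ^ v ∣ s := pow_padicValNat_dvd
  have hkodd : ¬ 2 ∣ k := by
    intro ⟨m, hm⟩
    have hd : 2 ^ (v + 1) ∣ s := ⟨m, by rw [hk, hm, pow_succ]; ring⟩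
    have := (padicValNat_dvd_iff_le (by omega)).mp hd
    omega
  have hdvd : 2 ^ (v + 1) ∣ s + 2 ^ v := by
    obtain ⟨m, hm⟩ : 2 ∣ k + 1 := by omega
    refine ⟨m, ?_⟩
    have h2 : 2 ^ v * (k + 1) = 2 ^ v * (2 * m) := by rw [hm]
    rw [hk, pow_succ]
    ring_nf
    ring_nf at h2
    linarith
  have hpos : s + 2 ^ v ≠ 0 := by positivity
  exact (padicValNat_dvd_iff_le hpos).mp hdvd

private lemma iter_val (s : ℕ) (hs : 0 < s) (j : ℕ) :
    0 < (fun x => x + 2 ^ padicValNat 2 x)^[j] s ∧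
    j ≤ padicValNat 2 ((fun x => x + 2 ^ padicValNat 2 x)^[j] s) := by
  induction j with
  | zero => simpa using hs
  | succ j ih =>
    obtain ⟨hpos, hval⟩ := ih
    rw [Function.iterate_succ_apply']
    refine ⟨by positivity, ?_⟩
    have := val_step _ hpos
    omega

theorem stmt9 (n s : ℕ) (hs : 0 < s) (hsn : s ≤ n) :
    Set.ncard {j : ℕ | (fun x => x + 2 ^ padicValNat 2 x)^[j] s ≤ n}
      ≤ Nat.log 2 n + 1 := by
  have hsub : {j : ℕ | (fun x => x + 2 ^ padicValNat 2 x)^[j] s ≤ n} ⊆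
      ↑(Finset.range (Nat.log 2 n + 1)) := by
    intro j hj
    simp only [Set.mem_setOf_eq] at hj
    obtain ⟨hpos, hval⟩ := iter_val s hs j
    set x := (fun x => x + 2 ^ padicValNat 2 x)^[j] s with hx
    have h1 : 2 ^ padicValNat 2 x ≤ x := Nat.le_of_dvd hpos pow_padicValNat_dvd
    have h2 : padicValNat 2 x ≤ Nat.log 2 n :=
      (Nat.le_log_iff_pow_le one_lt_two (by omega)).mpr (le_trans h1 hj)
    simp only [Finset.coe_range, Set.mem_Iio]
    omega
  calc Set.ncard _ ≤ (Finset.range (Nat.log 2 n + 1)).card := by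
        rw [← Set.ncard_coe_finset]
        exact Set.ncard_le_ncard hsub (Finset.range _).finite_toSet
    _ = Nat.log 2 n + 1 := Finset.card_range _
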